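/- Let H be the Legendre transform of the log-Laplace transform Λ of a bounded centered random variable, with m=essinf, M=esssup. For A>0, y>0, and f a continuous probability density on the torus T(A), the duality identity holds: sup_{a>0}{ a y − ∫_{T(A)} Λ(a f(x)) dx } = inf{ ∫_{Q(A)} H(u(x))dx : u∈B₁(A), ∫_{Q(A)} f(x)u(x)dx ≥ y }. -/

import Mathlib

open MeasureTheory
open scoped ENNReal

open MeasureTheory Real Filter
open scoped ENNReal Topology

set_option linter.unusedSectionVars false
namespace Stmt7Aux

lemma ofReal_max_zero (x : ℝ) : ENNReal.ofReal (max x 0) = ENNReal.ofReal x := by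
  rcases le_total x 0 with h | h
  · rw [max_eq_right h, ENNReal.ofReal_of_nonpos h, ENNReal.ofReal_zero]
  · rw [max_eq_left h]

lemma ofReal_sup_zero (x : ℝ) : ENNReal.ofReal (x ⊔ 0) = ENNReal.ofReal x :=
  ofReal_max_zero x


variable {Ω : Type*} [MeasurableSpace Ω] (μ : Measure Ω) [IsProbabilityMeasure μ] (ξ : Ω → ℝ)

noncomputable def phi (α : ℝ) : ℝ := ∫ ω, Real.exp (α * ξ ω) ∂μ
noncomputable def phi' (α : ℝ) : ℝ := ∫ ω, ξ ω * Real.exp (α * ξ ω) ∂μ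
noncomputable def L (α : ℝ) : ℝ := phi' μ ξ α / phi μ ξ α

variable {μ ξ}
variable (hmeas : Measurable ξ) (hbdd : ∀ᵐ ω ∂μ, |ξ ω| ≤ 1) (hmean : ∫ ω, ξ ω ∂μ = 0)

section basic
include hmeas hbdd

lemma int_exp (α : ℝ) : Integrable (fun ω => Real.exp (α * ξ ω)) μ := by
  refine (integrable_const (Real.exp |α|)).mono'
    ((hmeas.const_mul α).exp.aestronglyMeasurable) ?_
  filter_upwards [hbdd] with ω hω
  rw [Real.norm_eq_abs, abs_of_pos (Real.exp_pos _)]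
  apply Real.exp_le_exp.2
  calc α * ξ ω ≤ |α * ξ ω| := le_abs_self _
  _ = |α| * |ξ ω| := abs_mul _ _
  _ ≤ |α| := mul_le_of_le_one_right (abs_nonneg α) hω

lemma int_xexp (α : ℝ) : Integrable (fun ω => ξ ω * Real.exp (α * ξ ω)) μ := by
  refine (int_exp hmeas hbdd α).mono'
    (hmeas.mul ((hmeas.const_mul α).exp)).aestronglyMeasurable ?_
  filter_upwards [hbdd] with ω hω
  rw [Real.norm_eq_abs, abs_mul, abs_of_pos (Real.exp_pos _)]
  exact mul_le_of_le_one_left (Real.exp_pos _).le hω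

lemma phi_pos (α : ℝ) : 0 < phi μ ξ α := by
  have h := (int_exp hmeas hbdd α)
  have : 0 < μ Set.univ := by simp
  calc (0:ℝ) < ∫ ω, Real.exp (-|α|) ∂μ := by
        simp [Real.exp_pos]
  _ ≤ phi μ ξ α := by
        refine integral_mono_ae (integrable_const _) h ?_
        filter_upwards [hbdd] with ω hω
        apply Real.exp_le_exp.2
        calc -|α| ≤ -|α * ξ ω| := by
              rw [neg_le_neg_iff, abs_mul]
              exact mul_le_of_le_one_right (abs_nonneg _) hω
        _ ≤ α * ξ ω := neg_abs_le _

lemma abs_L_le_one (α : ℝ) : |L μ ξ α| ≤ 1 := by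
  rw [L, abs_div, abs_of_pos (phi_pos hmeas hbdd α), div_le_one (phi_pos hmeas hbdd α)]
  have habs : Integrable (fun ω => |ξ ω| * Real.exp (α * ξ ω)) μ := by
    simpa [abs_mul, abs_of_pos (Real.exp_pos _)] using (int_xexp hmeas hbdd α).abs
  calc |phi' μ ξ α| ≤ ∫ ω, |ξ ω| * Real.exp (α * ξ ω) ∂μ := by
        simpa [phi', Real.norm_eq_abs, abs_mul, abs_of_pos (Real.exp_pos _)] using
          norm_integral_le_integral_norm (μ := μ) (f := fun ω => ξ ω * Real.exp (α * ξ ω))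
  _ ≤ phi μ ξ α := by
        refine integral_mono_ae habs (int_exp hmeas hbdd α) ?_
        filter_upwards [hbdd] with ω hω
        exact mul_le_of_le_one_left (Real.exp_pos _).le hω

end basic

noncomputable def Lam (μ : Measure Ω) (ξ : Ω → ℝ) (α : ℝ) : ℝ := Real.log (phi μ ξ α)

lemma Lam_zero : Lam μ ξ 0 = 0 := by simp [Lam, phi]

lemma phi'_eq (hmeas : Measurable ξ) (hbdd : ∀ᵐ ω ∂μ, |ξ ω| ≤ 1) (β : ℝ) :
    phi' μ ξ β = L μ ξ β * phi μ ξ β := by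
  rw [L, div_mul_cancel₀]
  exact (phi_pos hmeas hbdd β).ne'

include hmeas hbdd

lemma L_zero (hmean : ∫ ω, ξ ω ∂μ = 0) : L μ ξ 0 = 0 := by
  have : phi' μ ξ 0 = 0 := by simpa [phi'] using hmean
  simp [L, this]

lemma phi_ge (α β : ℝ) :
    Real.exp ((α - β) * L μ ξ β) * phi μ ξ β ≤ phi μ ξ α := by
  set c := L μ ξ β with hc
  have key : ∀ ω, Real.exp ((α-β)*c) * (1 - (α-β)*c) * Real.exp (β * ξ ω)
      + Real.exp ((α-β)*c) * (α-β) * (ξ ω * Real.exp (β * ξ ω)) ≤ Real.exp (α * ξ ω) := by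
    intro ω
    have h1 : 1 + ((α-β)*ξ ω - (α-β)*c) ≤ Real.exp ((α-β)*ξ ω - (α-β)*c) := by
      simpa [add_comm] using Real.add_one_le_exp ((α-β)*ξ ω - (α-β)*c)
    have h2 : Real.exp ((α-β)*c) * (1 + ((α-β)*ξ ω - (α-β)*c)) * Real.exp (β * ξ ω)
        ≤ Real.exp ((α-β)*c) * Real.exp ((α-β)*ξ ω - (α-β)*c) * Real.exp (β * ξ ω) := by
      have := mul_le_mul_of_nonneg_left h1 (Real.exp_pos ((α-β)*c)).le
      exact mul_le_mul_of_nonneg_right this (Real.exp_pos _).le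
    calc Real.exp ((α-β)*c) * (1 - (α-β)*c) * Real.exp (β * ξ ω)
        + Real.exp ((α-β)*c) * (α-β) * (ξ ω * Real.exp (β * ξ ω))
        = Real.exp ((α-β)*c) * (1 + ((α-β)*ξ ω - (α-β)*c)) * Real.exp (β * ξ ω) := by ring
    _ ≤ Real.exp ((α-β)*c) * Real.exp ((α-β)*ξ ω - (α-β)*c) * Real.exp (β * ξ ω) := h2
    _ = Real.exp (α * ξ ω) := by
        rw [← Real.exp_add, ← Real.exp_add]; ring_nf
  have hint1 := (int_exp hmeas hbdd β).const_mul (Real.exp ((α-β)*c) * (1 - (α-β)*c))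
  have hint2 := (int_xexp hmeas hbdd β).const_mul (Real.exp ((α-β)*c) * (α-β))
  have hmono := integral_mono (hint1.add hint2) (int_exp hmeas hbdd α) (fun ω => key ω)
  simp only [Pi.add_apply] at hmono
  rw [integral_add hint1 hint2, integral_const_mul, integral_const_mul] at hmono
  have hφ' : phi' μ ξ β = c * phi μ ξ β := phi'_eq hmeas hbdd β
  calc Real.exp ((α-β)*c) * phi μ ξ β
      = Real.exp ((α-β)*c) * (1 - (α-β)*c) * phi μ ξ β
        + Real.exp ((α-β)*c) * (α-β) * (c * phi μ ξ β) := by ring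
  _ = Real.exp ((α-β)*c) * (1 - (α-β)*c) * phi μ ξ β
        + Real.exp ((α-β)*c) * (α-β) * phi' μ ξ β := by rw [hφ']
  _ ≤ phi μ ξ α := hmono

lemma tangent (α β : ℝ) :
    (α - β) * L μ ξ β ≤ Lam μ ξ α - Lam μ ξ β := by
  have h := phi_ge hmeas hbdd α β
  have h2 : Real.log (Real.exp ((α-β) * L μ ξ β) * phi μ ξ β) ≤ Real.log (phi μ ξ α) :=
    Real.log_le_log (mul_pos (Real.exp_pos _) (phi_pos hmeas hbdd β)) h
  rw [Real.log_mul (Real.exp_ne_zero _) (phi_pos hmeas hbdd β).ne', Real.log_exp] at h2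
  rw [Lam, Lam]
  linarith

lemma Lam_nonneg (hmean : ∫ ω, ξ ω ∂μ = 0) (α : ℝ) : 0 ≤ Lam μ ξ α := by
  have h := tangent hmeas hbdd α 0
  rw [Lam_zero, L_zero hmeas hbdd hmean] at h
  simpa using h


section M
variable {M : ℝ} (hM1 : ∀ᵐ ω ∂μ, ξ ω ≤ M)
include hmeas hbdd hM1

lemma phi_le_of_le {α β : ℝ} (hβα : β ≤ α) :
    phi μ ξ α ≤ Real.exp ((α - β) * M) * phi μ ξ β := by
  have : phi μ ξ α ≤ ∫ ω, Real.exp ((α-β)*M) * Real.exp (β * ξ ω) ∂μ := by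
    refine integral_mono_ae (int_exp hmeas hbdd α)
      ((int_exp hmeas hbdd β).const_mul _) ?_
    filter_upwards [hM1] with ω hω
    rw [← Real.exp_add]
    apply Real.exp_le_exp.2
    nlinarith
  simpa [integral_const_mul, phi] using this

lemma Lam_diff_le {α β : ℝ} (hβα : β ≤ α) :
    Lam μ ξ α - Lam μ ξ β ≤ (α - β) * M := by
  have h := phi_le_of_le hmeas hbdd hM1 hβα
  have h2 := Real.log_le_log (phi_pos hmeas hbdd α) h
  rw [Real.log_mul (Real.exp_ne_zero _) (phi_pos hmeas hbdd β).ne', Real.log_exp] at h2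
  rw [Lam, Lam]
  linarith

lemma k_monotone : Monotone (fun β => β * M - Lam μ ξ β) := by
  intro β α hβα
  have := Lam_diff_le hmeas hbdd hM1 hβα
  dsimp only
  nlinarith

lemma Lam_le_mul {α : ℝ} (hα : 0 ≤ α) : Lam μ ξ α ≤ α * M := by
  have := Lam_diff_le hmeas hbdd hM1 hα
  rw [Lam_zero] at this
  linarith

lemma L_le_M (α : ℝ) : L μ ξ α ≤ M := by
  rw [L, div_le_iff₀ (phi_pos hmeas hbdd α)]
  have h : phi' μ ξ α ≤ ∫ ω, M * Real.exp (α * ξ ω) ∂μ := by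
    refine integral_mono_ae (int_xexp hmeas hbdd α)
      ((int_exp hmeas hbdd α).const_mul M) ?_
    filter_upwards [hM1] with ω hω
    exact mul_le_mul_of_nonneg_right hω (Real.exp_pos _).le
  simpa [integral_const_mul, phi, phi'] using h

end M

section cont
include hmeas hbdd

lemma phi_cont : Continuous (phi μ ξ) := by
  rw [continuous_iff_continuousAt]
  intro α₀
  refine continuousAt_of_dominated (bound := fun _ => Real.exp (|α₀| + 1))
    (Eventually.of_forall fun α => ((hmeas.const_mul α).exp).aestronglyMeasurable)
    ?_ (integrable_const _) (Eventually.of_forall fun ω => ?_)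
  · filter_upwards [Metric.ball_mem_nhds α₀ one_pos] with α hα
    filter_upwards [hbdd] with ω hω
    rw [Real.norm_eq_abs, abs_of_pos (Real.exp_pos _)]
    apply Real.exp_le_exp.2
    have h1 : |α * ξ ω| ≤ |α| := by
      rw [abs_mul]; exact mul_le_of_le_one_right (abs_nonneg _) hω
    have h2 : |α| ≤ |α₀| + 1 := by
      have := abs_sub_abs_le_abs_sub α α₀
      have hd : |α - α₀| < 1 := by simpa [Real.dist_eq] using hα
      linarith
    linarith [le_abs_self (α * ξ ω)]
  · exact (continuous_id.mul continuous_const).rexp.continuousAt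

lemma phi'_cont : Continuous (phi' μ ξ) := by
  rw [continuous_iff_continuousAt]
  intro α₀
  refine continuousAt_of_dominated (bound := fun _ => Real.exp (|α₀| + 1))
    (Eventually.of_forall fun α =>
      (hmeas.mul (hmeas.const_mul α).exp).aestronglyMeasurable)
    ?_ (integrable_const _) (Eventually.of_forall fun ω => ?_)
  · filter_upwards [Metric.ball_mem_nhds α₀ one_pos] with α hα
    filter_upwards [hbdd] with ω hω
    rw [Real.norm_eq_abs, abs_mul, abs_of_pos (Real.exp_pos _)]
    have h1 : Real.exp (α * ξ ω) ≤ Real.exp (|α₀| + 1) := by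
      apply Real.exp_le_exp.2
      have h1 : |α * ξ ω| ≤ |α| := by
        rw [abs_mul]; exact mul_le_of_le_one_right (abs_nonneg _) hω
      have hd : |α - α₀| < 1 := by simpa [Real.dist_eq] using hα
      have := abs_sub_abs_le_abs_sub α α₀
      linarith [le_abs_self (α * ξ ω)]
    calc |ξ ω| * Real.exp (α * ξ ω) ≤ 1 * Real.exp (α * ξ ω) :=
          mul_le_mul_of_nonneg_right hω (Real.exp_pos _).le
    _ ≤ Real.exp (|α₀| + 1) := by rw [one_mul]; exact h1
  · exact (continuous_const.mul ((continuous_id.mul continuous_const).rexp)).continuousAt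

lemma Lam_cont : Continuous (Lam μ ξ) :=
  (phi_cont hmeas hbdd).log fun α => (phi_pos hmeas hbdd α).ne'

lemma L_cont : Continuous (L μ ξ) :=
  (phi'_cont hmeas hbdd).div (phi_cont hmeas hbdd) fun α => (phi_pos hmeas hbdd α).ne'

end cont

section limit
variable {M : ℝ} (hM0 : 0 < M) (hM3 : M ≤ 1) (hM1 : ∀ᵐ ω ∂μ, ξ ω ≤ M)
  (hM2 : ∀ t, t < M → 0 < μ {ω | t < ξ ω})
include hmeas hbdd hM0 hM3 hM1 hM2

lemma L_tendsto : Tendsto (L μ ξ) atTop (𝓝 M) := by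
  rw [tendsto_order]
  constructor
  · intro l hl
    set t := (max l 0 + M) / 2 with ht
    have hlt : l < t := by
      have h1 : l ≤ max l 0 := le_max_left _ _
      rw [ht]; linarith
    have ht0 : 0 ≤ t := by
      have : (0:ℝ) ≤ max l 0 := le_max_right _ _
      rw [ht]; linarith
    have htM : t < M := by
      have : max l 0 < M := max_lt hl hM0
      rw [ht]; linarith
    have ht1 : t ≤ 1 := le_trans htM.le hM3
    set s := (t + M) / 2 with hs
    have hts : t < s := by rw [hs]; linarith
    have hsM : s < M := by rw [hs]; linarith
    have hp : 0 < (μ {ω | s < ξ ω}).toReal :=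
      ENNReal.toReal_pos (hM2 s hsM).ne' (measure_ne_top μ _)
    set p := (μ {ω | s < ξ ω}).toReal with hpdef
    have hS1 : MeasurableSet {ω | s < ξ ω} := measurableSet_lt measurable_const hmeas
    have hS2 : MeasurableSet {ω | ξ ω ≤ t} := measurableSet_le hmeas measurable_const
    have key : ∀ α : ℝ, 0 ≤ α →
        (s - t) * Real.exp (α * s) * p - 2 * Real.exp (α * t)
          ≤ phi' μ ξ α - t * phi μ ξ α := by
      intro α hα
      have hint_b1 : Integrable ({ω | s < ξ ω}.indicator
          (fun _ => (s - t) * Real.exp (α * s))) μ := (integrable_const _).indicator hS1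
      have hint_b2 : Integrable ({ω | ξ ω ≤ t}.indicator
          (fun _ => -(2 * Real.exp (α * t)))) μ := (integrable_const _).indicator hS2
      have hint_f : Integrable (fun ω => (ξ ω - t) * Real.exp (α * ξ ω)) μ := by
        have : (fun ω => (ξ ω - t) * Real.exp (α * ξ ω))
            = fun ω => ξ ω * Real.exp (α * ξ ω) + (-t) * Real.exp (α * ξ ω) := by
          funext ω; ring
        rw [this]
        exact (int_xexp hmeas hbdd α).add ((int_exp hmeas hbdd α).const_mul _)
      have hble : ∀ᵐ ω ∂μ,
          {ω | s < ξ ω}.indicator (fun _ => (s - t) * Real.exp (α * s)) ω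
          + {ω | ξ ω ≤ t}.indicator (fun _ => -(2 * Real.exp (α * t))) ω
          ≤ (ξ ω - t) * Real.exp (α * ξ ω) := by
        filter_upwards [hbdd] with ω hω
        rcases lt_or_ge s (ξ ω) with h | h
        · rw [Set.indicator_of_mem (show ω ∈ {ω | s < ξ ω} from h),
            Set.indicator_of_notMem (show ω ∉ {ω | ξ ω ≤ t} by simp; linarith)]
          have e1 : Real.exp (α * s) ≤ Real.exp (α * ξ ω) := by
            apply Real.exp_le_exp.2; nlinarith
          have := mul_le_mul (show s - t ≤ ξ ω - t by linarith) e1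
            (Real.exp_pos _).le (by linarith)
          linarith
        · rw [Set.indicator_of_notMem (show ω ∉ {ω | s < ξ ω} by simpa using h)]
          rcases le_or_gt (ξ ω) t with h2 | h2
          · rw [Set.indicator_of_mem (show ω ∈ {ω | ξ ω ≤ t} from h2)]
            have e1 : Real.exp (α * ξ ω) ≤ Real.exp (α * t) := by
              apply Real.exp_le_exp.2; nlinarith
            have hξ : -1 ≤ ξ ω := (abs_le.1 hω).1
            have h3 : (ξ ω - t) * Real.exp (α * t) ≤ (ξ ω - t) * Real.exp (α * ξ ω) :=
              mul_le_mul_of_nonpos_left e1 (by linarith)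
            have h4 : -(2 * Real.exp (α * t)) ≤ (ξ ω - t) * Real.exp (α * t) := by
              nlinarith [Real.exp_pos (α * t)]
            linarith
          · rw [Set.indicator_of_notMem (show ω ∉ {ω | ξ ω ≤ t} by simpa using h2.not_ge)]
            have h5 : 0 ≤ (ξ ω - t) := by linarith
            nlinarith [Real.exp_pos (α * ξ ω)]
      have hmono := integral_mono_ae (hint_b1.add hint_b2) hint_f hble
      simp only [Pi.add_apply] at hmono
      rw [integral_add hint_b1 hint_b2, integral_indicator_const _ hS1,
        integral_indicator_const _ hS2] at hmono
      have hrhs : ∫ ω, (ξ ω - t) * Real.exp (α * ξ ω) ∂μ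
          = phi' μ ξ α - t * phi μ ξ α := by
        have : (fun ω => (ξ ω - t) * Real.exp (α * ξ ω))
            = fun ω => ξ ω * Real.exp (α * ξ ω) - t * Real.exp (α * ξ ω) := by
          funext ω; ring
        rw [this, integral_sub (int_xexp hmeas hbdd α)
          ((int_exp hmeas hbdd α).const_mul t), integral_const_mul]
        rfl
      rw [hrhs] at hmono
      have hq : (μ {ω | ξ ω ≤ t}).toReal ≤ 1 := by
        rw [← ENNReal.toReal_one]
        exact ENNReal.toReal_mono ENNReal.one_ne_top prob_le_one
      have : -(2 * Real.exp (α * t)) ≤ (μ {ω | ξ ω ≤ t}).toReal • -(2 * Real.exp (α * t)) := by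
        rw [smul_eq_mul]
        nlinarith [Real.exp_pos (α * t), ENNReal.toReal_nonneg (a := μ {ω | ξ ω ≤ t})]
      rw [smul_eq_mul, measureReal_def, measureReal_def, ← hpdef] at hmono
      nlinarith
    have hev : ∀ᶠ α in atTop, (0:ℝ) ≤ (s - t) * Real.exp (α * s) * p - 2 * Real.exp (α * t) := by
      have hgrow : Tendsto (fun α : ℝ => Real.exp (α * (s - t))) atTop atTop :=
        Real.tendsto_exp_atTop.comp (Tendsto.atTop_mul_const (by linarith) tendsto_id)
      filter_upwards [hgrow.eventually_ge_atTop (2 / ((s - t) * p)), eventually_ge_atTop (0:ℝ)]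
        with α hα hα0
      have h1 : 2 / ((s - t) * p) * ((s - t) * p) ≤ Real.exp (α * (s - t)) * ((s - t) * p) := by
        exact mul_le_mul_of_nonneg_right hα
          (mul_pos (show (0:ℝ) < s - t by linarith) hp).le
      rw [div_mul_cancel₀ _ (ne_of_gt (mul_pos (show (0:ℝ) < s - t by linarith) hp))] at h1
      have h2 : Real.exp (α * s) = Real.exp (α * t) * Real.exp (α * (s - t)) := by
        rw [← Real.exp_add]; ring_nf
      have h3 : 1 ≤ Real.exp (α * t) := by
        rw [show (1:ℝ) = Real.exp 0 by simp]
        apply Real.exp_le_exp.2; exact mul_nonneg hα0 ht0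
      rw [h2]
      nlinarith [Real.exp_pos (α * t)]
    filter_upwards [hev, eventually_ge_atTop (0:ℝ)] with α hα hα0
    have h6 := le_trans hα (key α hα0)
    have h7 : t ≤ L μ ξ α := by
      rw [L, le_div_iff₀ (phi_pos hmeas hbdd α)]
      linarith
    linarith
  · intro u hu
    filter_upwards with α
    exact lt_of_le_of_lt (L_le_M hmeas hbdd hM1 α) hu

end limit

section legendre
include hmeas hbdd

lemma bLb_nonneg (β : ℝ) : 0 ≤ β * L μ ξ β - Lam μ ξ β := by
  have h := tangent hmeas hbdd 0 β
  rw [Lam_zero] at h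
  linarith

lemma legendre (β : ℝ) :
    (⨆ α : ℝ, ENNReal.ofReal (α * L μ ξ β - Lam μ ξ α))
      = ENNReal.ofReal (β * L μ ξ β - Lam μ ξ β) := by
  apply le_antisymm
  · refine iSup_le fun α => ENNReal.ofReal_le_ofReal ?_
    have h := tangent hmeas hbdd α β
    nlinarith
  · exact le_iSup (fun α : ℝ => ENNReal.ofReal (α * L μ ξ β - Lam μ ξ α)) β

lemma iSup_k {M : ℝ} (hM1 : ∀ᵐ ω ∂μ, ξ ω ≤ M) {c : ℝ} (hc : 0 < c) :
    (⨆ n : ℕ, ENNReal.ofReal (((n : ℝ) + 1) * c * M - Lam μ ξ (((n : ℝ) + 1) * c)))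
      = ⨆ α : ℝ, ENNReal.ofReal (α * M - Lam μ ξ α) := by
  apply le_antisymm
  · exact iSup_le fun n => le_iSup (fun α : ℝ => ENNReal.ofReal (α * M - Lam μ ξ α)) _
  · refine iSup_le fun α => ?_
    obtain ⟨n, hn⟩ := exists_nat_ge (α / c)
    have hαn : α ≤ ((n : ℝ) + 1) * c := by
      have := (div_le_iff₀ hc).1 hn
      nlinarith
    refine le_trans (ENNReal.ofReal_le_ofReal ?_)
      (le_iSup (fun n : ℕ => ENNReal.ofReal (((n : ℝ) + 1) * c * M
        - Lam μ ξ (((n : ℝ) + 1) * c))) n)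
    exact k_monotone hmeas hbdd hM1 hαn

end legendre

section Mdef

noncomputable def MM (μ : Measure Ω) (ξ : Ω → ℝ) : ℝ := sInf {t : ℝ | ∀ᵐ ω ∂μ, ξ ω ≤ t}

variable (hmeas : Measurable ξ) (hbdd : ∀ᵐ ω ∂μ, |ξ ω| ≤ 1) (hmean : ∫ ω, ξ ω ∂μ = 0)
include hmeas hbdd hmean

lemma MM_mem_ne : ({t : ℝ | ∀ᵐ ω ∂μ, ξ ω ≤ t}).Nonempty :=
  ⟨1, by filter_upwards [hbdd] with ω hω; exact (abs_le.1 hω).2⟩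

lemma MM_bddBelow : BddBelow {t : ℝ | ∀ᵐ ω ∂μ, ξ ω ≤ t} := by
  refine ⟨0, fun t ht => ?_⟩
  have hint : Integrable ξ μ := by
    refine (integrable_const 1).mono' hmeas.aestronglyMeasurable ?_
    filter_upwards [hbdd] with ω hω
    simpa [Real.norm_eq_abs] using hω
  have h := integral_mono_ae hint (integrable_const t) ht
  rw [hmean] at h
  simpa using h

lemma MM_nonneg : 0 ≤ MM μ ξ :=
  le_csInf (MM_mem_ne hmeas hbdd hmean) fun t ht => by
    have hint : Integrable ξ μ := by
      refine (integrable_const 1).mono' hmeas.aestronglyMeasurable ?_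
      filter_upwards [hbdd] with ω hω
      simpa [Real.norm_eq_abs] using hω
    have h := integral_mono_ae hint (integrable_const t) ht
    rw [hmean] at h
    simpa using h

lemma MM_le_one : MM μ ξ ≤ 1 :=
  csInf_le (MM_bddBelow hmeas hbdd hmean)
    (by filter_upwards [hbdd] with ω hω; exact (abs_le.1 hω).2)

lemma MM_ae : ∀ᵐ ω ∂μ, ξ ω ≤ MM μ ξ := by
  have h : ∀ n : ℕ, ∀ᵐ ω ∂μ, ξ ω ≤ MM μ ξ + 1 / ((n : ℝ) + 1) := by
    intro n
    have hlt : sInf {t : ℝ | ∀ᵐ ω ∂μ, ξ ω ≤ t} < MM μ ξ + 1 / ((n : ℝ) + 1) := by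
      rw [← MM]
      have : (0:ℝ) < 1 / ((n : ℝ) + 1) := by positivity
      linarith
    obtain ⟨t, ht, htlt⟩ := (csInf_lt_iff (MM_bddBelow hmeas hbdd hmean)
      (MM_mem_ne hmeas hbdd hmean)).1 hlt
    filter_upwards [ht] with ω hω
    linarith
  have h2 := ae_all_iff.2 h
  filter_upwards [h2] with ω hω
  by_contra hc
  push_neg at hc
  obtain ⟨n, hn⟩ := exists_nat_one_div_lt (show (0:ℝ) < ξ ω - MM μ ξ by linarith)
  have := hω n
  linarith

lemma MM_pos_meas {t : ℝ} (ht : t < MM μ ξ) : 0 < μ {ω | t < ξ ω} := by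
  by_contra hc
  push_neg at hc
  have h0 : μ {ω | t < ξ ω} = 0 := le_antisymm hc (by simp)
  have : ∀ᵐ ω ∂μ, ξ ω ≤ t := by
    rw [ae_iff]
    convert h0 using 2
    ext ω
    simp [not_le]
  have hmem : t ∈ {t : ℝ | ∀ᵐ ω ∂μ, ξ ω ≤ t} := this
  have := csInf_le (MM_bddBelow hmeas hbdd hmean) hmem
  rw [← MM] at this
  linarith

end Mdef
end Stmt7Aux

/-- duality identity.  With `Λ` the log-Laplace transform of a
bounded centered random variable and `H` its Legendre transform, for `A > 0`,
`y > 0` and `f` a continuous probability density on the torus `T(A)`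
(identified with the cube `Q(A)`),
`sup_{a>0} { a y − ∫ Λ(a f) } = inf { ∫ H(u) : u ∈ B₁(A), ∫ f u ≥ y }`. -/
theorem stmt7 {Ω : Type*} [MeasurableSpace Ω] (μ : Measure Ω) [IsProbabilityMeasure μ]
    (ξ : Ω → ℝ) (hmeas : Measurable ξ)
    (hbdd : ∀ᵐ ω ∂μ, |ξ ω| ≤ 1) (hmean : ∫ ω, ξ ω ∂μ = 0)
    (Λ : ℝ → ℝ)
    (hΛ : ∀ α : ℝ, Λ α = Real.log (∫ ω, Real.exp (α * ξ ω) ∂μ))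
    (H : ℝ → ℝ≥0∞)
    (hH : ∀ y : ℝ, H y = ⨆ α : ℝ, ENNReal.ofReal (α * y - Λ α))
    {d : ℕ} (A y : ℝ) (hA : 0 < A) (hy : 0 < y)
    (Q : Set (EuclideanSpace ℝ (Fin d)))
    (hQ : Q = {x | ∀ i, |x i| ≤ A / 2})
    (f : EuclideanSpace ℝ (Fin d) → ℝ)
    (hf_cont : Continuous f) (hf_nonneg : ∀ x, 0 ≤ f x)
    (hf_prob : ∫ x in Q, f x = 1) :
    (⨆ a : {a : ℝ // 0 < a}, ENNReal.ofReal ((a : ℝ) * y - ∫ x in Q, Λ ((a : ℝ) * f x))) =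
      ⨅ (u : EuclideanSpace ℝ (Fin d) → ℝ)
        (_ : Measurable u) (_ : ∀ x, |u x| ≤ 1) (_ : y ≤ ∫ x in Q, f x * u x),
        ∫⁻ x in Q, H (u x) := by
  classical
  have hΛe : ∀ α : ℝ, Λ α = Stmt7Aux.Lam μ ξ α := fun α => by rw [hΛ]; rfl
  have hQcomp : IsCompact Q := by
    rw [hQ]
    have heq : {x : EuclideanSpace ℝ (Fin d) | ∀ i, |x i| ≤ A / 2}
        = (EuclideanSpace.equiv (Fin d) ℝ).toHomeomorph ⁻¹'
          (Set.univ.pi fun _ : Fin d => Set.Icc (-(A/2)) (A/2)) := by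
      ext x
      simp [abs_le, Set.mem_pi, EuclideanSpace.equiv, Pi.le_def, forall_and]
    rw [heq, Homeomorph.isCompact_preimage]
    exact isCompact_univ_pi fun i => isCompact_Icc
  have hQmeas : MeasurableSet Q := hQcomp.isClosed.measurableSet
  haveI hQfin : IsFiniteMeasure (volume.restrict Q) :=
    ⟨by rw [Measure.restrict_apply_univ]; exact hQcomp.measure_lt_top⟩
  have hf_int : IntegrableOn f Q := hf_cont.continuousOn.integrableOn_compact hQcomp
  have hLam_cont := Stmt7Aux.Lam_cont hmeas hbdd
  have hL_cont := Stmt7Aux.L_cont hmeas hbdd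
  have hLamInt : ∀ a : ℝ, IntegrableOn (fun x => Stmt7Aux.Lam μ ξ (a * f x)) Q := fun a =>
    ((hLam_cont.comp (continuous_const.mul hf_cont)).continuousOn).integrableOn_compact hQcomp
  set M := Stmt7Aux.MM μ ξ with hMdef
  have hM1 : ∀ᵐ ω ∂μ, ξ ω ≤ M := Stmt7Aux.MM_ae hmeas hbdd hmean
  have hM3 : M ≤ 1 := Stmt7Aux.MM_le_one hmeas hbdd hmean
  have hMnn : 0 ≤ M := Stmt7Aux.MM_nonneg hmeas hbdd hmean
  have hM2 : ∀ t, t < M → 0 < μ {ω | t < ξ ω} := fun t ht =>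
    Stmt7Aux.MM_pos_meas hmeas hbdd hmean ht
  have hLb := Stmt7Aux.abs_L_le_one hmeas hbdd
  apply le_antisymm
  · -- weak duality
    refine le_iInf fun u => le_iInf fun hu_meas => le_iInf fun hu_bdd => le_iInf fun hu_con => ?_
    refine iSup_le ?_
    rintro ⟨a, ha⟩
    simp only [hΛe]
    have hfu_int : IntegrableOn (fun x => f x * u x) Q := by
      refine hf_int.mono' ((hf_cont.measurable.mul hu_meas).aestronglyMeasurable) ?_
      refine Eventually.of_forall fun x => ?_
      rw [Real.norm_eq_abs, abs_mul, abs_of_nonneg (hf_nonneg x)]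
      exact mul_le_of_le_one_right (hf_nonneg x) (hu_bdd x)
    have hg_int : IntegrableOn
        (fun x => a * (f x * u x) - Stmt7Aux.Lam μ ξ (a * f x)) Q :=
      (hfu_int.const_mul a).sub (hLamInt a)
    have step1 : a * y - ∫ x in Q, Stmt7Aux.Lam μ ξ (a * f x)
        ≤ ∫ x in Q, (a * (f x * u x) - Stmt7Aux.Lam μ ξ (a * f x)) := by
      rw [integral_sub (hfu_int.const_mul a) (hLamInt a), integral_const_mul]
      have : a * y ≤ a * ∫ x in Q, f x * u x := mul_le_mul_of_nonneg_left hu_con ha.le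
      linarith
    have step2 : ENNReal.ofReal (∫ x in Q, (a * (f x * u x) - Stmt7Aux.Lam μ ξ (a * f x)))
        ≤ ∫⁻ x in Q, ENNReal.ofReal (a * (f x * u x) - Stmt7Aux.Lam μ ξ (a * f x)) := by
      calc ENNReal.ofReal (∫ x in Q, (a * (f x * u x) - Stmt7Aux.Lam μ ξ (a * f x)))
          ≤ ENNReal.ofReal (∫ x in Q,
              max (a * (f x * u x) - Stmt7Aux.Lam μ ξ (a * f x)) 0) := by
            apply ENNReal.ofReal_le_ofReal
            exact integral_mono hg_int hg_int.pos_part (fun x => le_max_left _ _)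
      _ = ∫⁻ x in Q, ENNReal.ofReal
            (max (a * (f x * u x) - Stmt7Aux.Lam μ ξ (a * f x)) 0) :=
            ofReal_integral_eq_lintegral_ofReal hg_int.pos_part
              (Eventually.of_forall fun x => le_max_right _ _)
      _ = ∫⁻ x in Q, ENNReal.ofReal (a * (f x * u x) - Stmt7Aux.Lam μ ξ (a * f x)) := by
            simp only [Stmt7Aux.ofReal_sup_zero, Stmt7Aux.ofReal_max_zero]
    refine le_trans (le_trans (ENNReal.ofReal_le_ofReal step1) step2) ?_
    refine lintegral_mono fun x => ?_
    rw [hH (u x)]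
    simp only [hΛe]
    have hrw : a * (f x * u x) - Stmt7Aux.Lam μ ξ (a * f x)
        = (a * f x) * u x - Stmt7Aux.Lam μ ξ (a * f x) := by ring
    rw [hrw]
    exact le_iSup (fun α : ℝ => ENNReal.ofReal (α * u x - Stmt7Aux.Lam μ ξ α)) (a * f x)
  · -- strong duality
    rcases lt_trichotomy M y with hMy | hMy | hMy
    · -- M < y : both sides ⊤
      have htop : (⨆ a : {a : ℝ // 0 < a},
          ENNReal.ofReal ((a : ℝ) * y - ∫ x in Q, Λ ((a : ℝ) * f x))) = ⊤ := by
        rw [iSup_eq_top]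
        intro b hb
        obtain ⟨n, hn⟩ := exists_nat_gt (b.toReal / (y - M))
        refine ⟨⟨(n : ℝ) + 1, by positivity⟩, ?_⟩
        have hn1 : b.toReal < ((n : ℝ) + 1) * (y - M) := by
          have h := (div_lt_iff₀ (by linarith : (0:ℝ) < y - M)).1 hn
          nlinarith
        have hb2 : b < ENNReal.ofReal (((n : ℝ) + 1) * (y - M)) :=
          (ENNReal.lt_ofReal_iff_toReal_lt hb.ne).2 hn1
        refine lt_of_lt_of_le hb2 (ENNReal.ofReal_le_ofReal ?_)
        simp only [hΛe]
        have hint1 : ∫ x in Q, Stmt7Aux.Lam μ ξ (((n : ℝ) + 1) * f x)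
            ≤ ∫ x in Q, ((n : ℝ) + 1) * f x * M := by
          refine integral_mono_ae (hLamInt _)
            (((continuous_const.mul hf_cont).mul continuous_const).continuousOn.integrableOn_compact hQcomp) ?_
          refine Eventually.of_forall fun x => ?_
          exact Stmt7Aux.Lam_le_mul hmeas hbdd hM1
            (mul_nonneg (by positivity) (hf_nonneg x))
        have hint2 : ∫ x in Q, ((n : ℝ) + 1) * f x * M = ((n : ℝ) + 1) * M := by
          rw [integral_mul_const, integral_const_mul, hf_prob]; ring
        have := hint1.trans hint2.le
        nlinarith
      rw [htop]
      exact le_top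
    · -- M = y
      have hMpos : 0 < M := hMy ▸ hy
      set u₀ : EuclideanSpace ℝ (Fin d) → ℝ := fun x => if 0 < f x then M else 0 with hu₀
      have hu₀meas : Measurable u₀ :=
        Measurable.ite (measurableSet_lt measurable_const hf_cont.measurable)
          measurable_const measurable_const
      have hu₀bdd : ∀ x, |u₀ x| ≤ 1 := by
        intro x
        rw [hu₀]
        dsimp only
        split
        · rw [abs_of_nonneg hMnn]; exact hM3
        · simp
      have hfu : ∀ x, f x * u₀ x = f x * M := by
        intro x
        rw [hu₀]
        dsimp only
        split
        · rfl
        · rename_i h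
          push_neg at h
          have hx0 : f x = 0 := le_antisymm h (hf_nonneg x)
          rw [hx0]; ring
      have hu₀con : y ≤ ∫ x in Q, f x * u₀ x := by
        have : ∫ x in Q, f x * u₀ x = M := by
          simp only [hfu]
          rw [integral_mul_const, hf_prob, one_mul]
        rw [this, hMy]
      refine le_trans (iInf_le_of_le u₀ (iInf_le_of_le hu₀meas
        (iInf_le_of_le hu₀bdd (iInf_le _ hu₀con)))) ?_
      have hH0 : H 0 = 0 := by
        rw [hH 0]
        refine le_antisymm (iSup_le fun α => ?_) (by simp)
        rw [mul_zero, zero_sub, hΛe]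
        rw [ENNReal.ofReal_of_nonpos
          (neg_nonpos.2 (Stmt7Aux.Lam_nonneg hmeas hbdd hmean α))]
      have hptwise : ∀ x, (⨆ n : ℕ, ENNReal.ofReal
          (((n:ℝ)+1) * f x * M - Stmt7Aux.Lam μ ξ (((n:ℝ)+1) * f x))) = H (u₀ x) := by
        intro x
        rcases lt_or_ge 0 (f x) with h0 | h0
        · rw [hu₀]
          dsimp only
          rw [if_pos h0, hH M]
          simp only [hΛe]
          exact Stmt7Aux.iSup_k hmeas hbdd hM1 h0
        · have hfx : f x = 0 := le_antisymm h0 (hf_nonneg x)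
          rw [hu₀]
          dsimp only
          rw [if_neg (by rw [hfx]; exact lt_irrefl 0), hH0]
          simp [hfx, Stmt7Aux.Lam_zero]
      calc ∫⁻ x in Q, H (u₀ x)
          = ∫⁻ x in Q, ⨆ n : ℕ, ENNReal.ofReal
              (((n:ℝ)+1) * f x * M - Stmt7Aux.Lam μ ξ (((n:ℝ)+1) * f x)) :=
            (lintegral_congr fun x => (hptwise x).symm)
      _ = ⨆ n : ℕ, ∫⁻ x in Q, ENNReal.ofReal
              (((n:ℝ)+1) * f x * M - Stmt7Aux.Lam μ ξ (((n:ℝ)+1) * f x)) := by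
            refine lintegral_iSup (fun n => ?_) ?_
            · exact ENNReal.measurable_ofReal.comp
                (((continuous_const.mul hf_cont).mul continuous_const).sub
                  (hLam_cont.comp (continuous_const.mul hf_cont))).measurable
            · intro n m hnm
              intro x
              refine ENNReal.ofReal_le_ofReal ?_
              refine Stmt7Aux.k_monotone hmeas hbdd hM1 ?_
              have hc : ((n:ℝ)+1) ≤ ((m:ℝ)+1) := by
                have : (n:ℝ) ≤ (m:ℝ) := Nat.cast_le.2 hnm
                linarith
              exact mul_le_mul_of_nonneg_right hc (hf_nonneg x)
      _ ≤ ⨆ a : {a : ℝ // 0 < a},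
            ENNReal.ofReal ((a : ℝ) * y - ∫ x in Q, Λ ((a : ℝ) * f x)) := by
            refine iSup_le fun n => ?_
            have hg1_int : IntegrableOn (fun x => ((n:ℝ)+1) * f x * M) Q :=
              ((continuous_const.mul hf_cont).mul continuous_const).continuousOn.integrableOn_compact hQcomp
            have hg_int : IntegrableOn
                (fun x => ((n:ℝ)+1) * f x * M - Stmt7Aux.Lam μ ξ (((n:ℝ)+1) * f x)) Q :=
              hg1_int.sub (hLamInt _)
            have hgnn : ∀ x, 0 ≤ ((n:ℝ)+1) * f x * M
                - Stmt7Aux.Lam μ ξ (((n:ℝ)+1) * f x) := fun x => by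
              have := Stmt7Aux.Lam_le_mul hmeas hbdd hM1
                (show 0 ≤ ((n:ℝ)+1) * f x from mul_nonneg (by positivity) (hf_nonneg x))
              linarith
            rw [← ofReal_integral_eq_lintegral_ofReal hg_int (Eventually.of_forall hgnn)]
            have heq : ∫ x in Q, (((n:ℝ)+1) * f x * M - Stmt7Aux.Lam μ ξ (((n:ℝ)+1) * f x))
                = ((n:ℝ)+1) * y - ∫ x in Q, Stmt7Aux.Lam μ ξ (((n:ℝ)+1) * f x) := by
              rw [integral_sub hg1_int (hLamInt _), integral_mul_const, integral_const_mul,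
                hf_prob, hMy]
              ring
            rw [heq]
            refine le_trans (le_of_eq ?_)
              (le_iSup (fun a : {a : ℝ // 0 < a} =>
                ENNReal.ofReal ((a : ℝ) * y - ∫ x in Q, Λ ((a : ℝ) * f x)))
                ⟨(n:ℝ)+1, by positivity⟩)
            simp only [hΛe]
    · -- y < M
      have hMpos : 0 < M := lt_trans hy hMy
      set χ : ℝ → ℝ := fun a => ∫ x in Q, f x * Stmt7Aux.L μ ξ (a * f x) with hχ
      have hχmeas : ∀ a : ℝ, Continuous fun x => f x * Stmt7Aux.L μ ξ (a * f x) :=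
        fun a => hf_cont.mul (hL_cont.comp (continuous_const.mul hf_cont))
      have hχbound : ∀ a : ℝ, ∀ x, ‖f x * Stmt7Aux.L μ ξ (a * f x)‖ ≤ f x := by
        intro a x
        rw [Real.norm_eq_abs, abs_mul, abs_of_nonneg (hf_nonneg x)]
        exact mul_le_of_le_one_right (hf_nonneg x) (hLb _)
      have hχcont : Continuous χ := by
        refine continuous_of_dominated (fun a => (hχmeas a).aestronglyMeasurable)
          (fun a => Eventually.of_forall fun x => hχbound a x) hf_int ?_
        refine Eventually.of_forall fun x => ?_
        exact continuous_const.mul (hL_cont.comp (continuous_id.mul continuous_const))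
      have hχ0 : χ 0 = 0 := by
        simp [hχ, Stmt7Aux.L_zero hmeas hbdd hmean]
      have hχlim : Tendsto χ atTop (𝓝 M) := by
        have hLt := Stmt7Aux.L_tendsto hmeas hbdd hMpos hM3 hM1 hM2
        have key : Tendsto (fun a => ∫ x in Q, f x * Stmt7Aux.L μ ξ (a * f x)) atTop
            (𝓝 (∫ x in Q, f x * M)) := by
          refine tendsto_integral_filter_of_dominated_convergence f
            (Eventually.of_forall fun a => (hχmeas a).aestronglyMeasurable)
            (Eventually.of_forall fun a => Eventually.of_forall fun x => hχbound a x)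
            hf_int (Eventually.of_forall fun x => ?_)
          rcases eq_or_lt_of_le (hf_nonneg x) with h0 | h0
          · have : ∀ a : ℝ, f x * Stmt7Aux.L μ ξ (a * f x) = f x * M := by
              intro a
              rw [← h0]
              ring
            simp only [this]
            exact tendsto_const_nhds
          · exact Tendsto.const_mul (f x)
              (hLt.comp (Tendsto.atTop_mul_const h0 tendsto_id))
        have hM' : ∫ x in Q, f x * M = M := by rw [integral_mul_const, hf_prob, one_mul]
        rw [hχ]
        rw [hM'] at key
        exact key
      obtain ⟨a₁, hya₁, ha₁0⟩ : ∃ a₁, y < χ a₁ ∧ (0:ℝ) ≤ a₁ :=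
        ((hχlim.eventually (lt_mem_nhds hMy)).and (eventually_ge_atTop (0:ℝ))).exists
      have hmem : y ∈ Set.Icc (χ 0) (χ a₁) := ⟨by rw [hχ0]; exact hy.le, hya₁.le⟩
      obtain ⟨a₀, ha₀mem, ha₀⟩ := intermediate_value_Icc ha₁0 hχcont.continuousOn hmem
      have ha₀pos : 0 < a₀ := by
        rcases eq_or_lt_of_le ha₀mem.1 with h | h
        · exfalso
          rw [← h] at ha₀
          rw [hχ0] at ha₀
          linarith
        · exact h
      set u₀ : EuclideanSpace ℝ (Fin d) → ℝ := fun x => Stmt7Aux.L μ ξ (a₀ * f x) with hu₀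
      have hu₀meas : Measurable u₀ := (hL_cont.comp (continuous_const.mul hf_cont)).measurable
      have hu₀bdd : ∀ x, |u₀ x| ≤ 1 := fun x => hLb _
      have hu₀con : y ≤ ∫ x in Q, f x * u₀ x := le_of_eq ha₀.symm
      refine le_trans (iInf_le_of_le u₀ (iInf_le_of_le hu₀meas
        (iInf_le_of_le hu₀bdd (iInf_le _ hu₀con)))) ?_
      have hg_eq : ∀ x, H (u₀ x)
          = ENNReal.ofReal ((a₀ * f x) * u₀ x - Stmt7Aux.Lam μ ξ (a₀ * f x)) := by
        intro x
        rw [hH (u₀ x)]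
        simp only [hΛe]
        exact Stmt7Aux.legendre hmeas hbdd (a₀ * f x)
      have hgnn : ∀ x, 0 ≤ (a₀ * f x) * u₀ x - Stmt7Aux.Lam μ ξ (a₀ * f x) :=
        fun x => Stmt7Aux.bLb_nonneg hmeas hbdd (a₀ * f x)
      have hg1_int : IntegrableOn (fun x => (a₀ * f x) * u₀ x) Q :=
        ((continuous_const.mul hf_cont).mul
          (hL_cont.comp (continuous_const.mul hf_cont))).continuousOn.integrableOn_compact hQcomp
      have hg_int : IntegrableOn
          (fun x => (a₀ * f x) * u₀ x - Stmt7Aux.Lam μ ξ (a₀ * f x)) Q :=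
        hg1_int.sub (hLamInt a₀)
      have heq2 : ∫⁻ x in Q, H (u₀ x)
          = ENNReal.ofReal (∫ x in Q, ((a₀ * f x) * u₀ x - Stmt7Aux.Lam μ ξ (a₀ * f x))) := by
        rw [ofReal_integral_eq_lintegral_ofReal hg_int (Eventually.of_forall hgnn)]
        exact lintegral_congr fun x => hg_eq x
      have heq3 : ∫ x in Q, ((a₀ * f x) * u₀ x - Stmt7Aux.Lam μ ξ (a₀ * f x))
          = a₀ * y - ∫ x in Q, Stmt7Aux.Lam μ ξ (a₀ * f x) := by
        rw [integral_sub hg1_int (hLamInt a₀)]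
        congr 1
        have : ∀ x, (a₀ * f x) * u₀ x = a₀ * (f x * u₀ x) := fun x => by ring
        simp only [this]
        rw [integral_const_mul]
        congr 1
      rw [heq2, heq3]
      refine le_trans (le_of_eq ?_)
        (le_iSup (fun a : {a : ℝ // 0 < a} =>
          ENNReal.ofReal ((a : ℝ) * y - ∫ x in Q, Λ ((a : ℝ) * f x))) ⟨a₀, ha₀pos⟩)
      simp only [hΛe]
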